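/- arXiv:1603.02433 — 10 statements merged into one kernel-verified Lean document; each statement's English description precedes it below -/
import Mathlib

section
/- For all integers n and k with n > k ≥ 1, the k-tuple restrained domination number of the complete graph K_n equals n if n ≤ 2k, and equals k if n ≥ 2k + 1. -/
/-- `S` is a `k`-tuple restrained dominating set of `G`: every vertex has at least `k`
vertices of `S` in its closed neighborhood, and every vertex outside `S` has at least
`k` neighbors outside `S`. -/
def SimpleGraph.IsKRDS {V : Type*} (G : SimpleGraph V) (k : ℕ) (S : Set V) : Prop :=
  (∀ x : V, k ≤ ((insert x (G.neighborSet x)) ∩ S).ncard) ∧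
  ∀ x : V, x ∉ S → k ≤ (G.neighborSet x \ S).ncard

/-- The `k`-tuple restrained domination number of `G`. -/
noncomputable def SimpleGraph.kRDNum {V : Type*} [Fintype V] (G : SimpleGraph V) (k : ℕ) : ℕ :=
  sInf {m | ∃ S : Set V, G.IsKRDS k S ∧ S.ncard = m}

lemma top_closed_nbhd (n : ℕ) (x : Fin n) :
    insert x ((⊤ : SimpleGraph (Fin n)).neighborSet x) = Set.univ := by
  ext y
  simp only [SimpleGraph.neighborSet, SimpleGraph.top_adj, Set.mem_insert_iff,
    Set.mem_setOf_eq, Set.mem_univ, iff_true]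
  by_cases h : y = x
  · left; exact h
  · right; exact fun hxy => h hxy.symm

lemma top_nbhd_diff (n : ℕ) (x : Fin n) (S : Set (Fin n)) :
    (⊤ : SimpleGraph (Fin n)).neighborSet x \ S = Sᶜ \ {x} := by
  ext y
  simp only [SimpleGraph.neighborSet, SimpleGraph.top_adj, Set.mem_diff, Set.mem_setOf_eq,
    Set.mem_compl_iff, Set.mem_singleton_iff]
  constructor
  · rintro ⟨h1, h2⟩; exact ⟨h2, fun h => h1 h.symm⟩
  · rintro ⟨h1, h2⟩; exact ⟨fun h => h2 h.symm, h1⟩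

lemma filter_lt_card (n k : ℕ) (h : k < n) :
    (Finset.filter (fun i : Fin n => (i : ℕ) < k) Finset.univ).card = k := by
  have he : Finset.filter (fun i : Fin n => (i : ℕ) < k) Finset.univ = Finset.Iio ⟨k, h⟩ := by
    ext i; simp [Finset.mem_Iio, Fin.lt_def]
  rw [he, Fin.card_Iio]

/-- For all integers n > k ≥ 1, the k-tuple restrained domination number of K_n equals
n if n ≤ 2k, and equals k if n ≥ 2k + 1. -/
theorem kRDNum_completeGraph (n k : ℕ) (hk : 1 ≤ k) (hn : k < n) :
    (n ≤ 2 * k → (⊤ : SimpleGraph (Fin n)).kRDNum k = n) ∧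
    (2 * k + 1 ≤ n → (⊤ : SimpleGraph (Fin n)).kRDNum k = k) := by
  have hn0 : 0 < n := lt_of_le_of_lt (Nat.zero_le k) hn
  have x0 : Fin n := ⟨0, hn0⟩
  have hcard : ∀ S : Set (Fin n), S.ncard + Sᶜ.ncard = n := by
    intro S
    rw [Set.ncard_add_ncard_compl, Nat.card_eq_fintype_card, Fintype.card_fin]
  -- basic facts about any kRDS S
  have hbig : ∀ S : Set (Fin n), (⊤ : SimpleGraph (Fin n)).IsKRDS k S → k ≤ S.ncard := by
    intro S ⟨h1, _⟩
    have := h1 x0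
    rwa [top_closed_nbhd, Set.univ_inter] at this
  constructor
  · -- n ≤ 2k case
    intro hle
    have hset : {m | ∃ S : Set (Fin n), (⊤ : SimpleGraph (Fin n)).IsKRDS k S ∧ S.ncard = m}
        = {n} := by
      ext m
      simp only [Set.mem_setOf_eq, Set.mem_singleton_iff]
      constructor
      · rintro ⟨S, hS, rfl⟩
        by_contra hne
        -- S ≠ univ, get x ∉ S
        have hSne : S ≠ Set.univ := by
          intro h; apply hne; rw [h, Set.ncard_univ, Nat.card_eq_fintype_card, Fintype.card_fin]
        obtain ⟨x, hx⟩ : ∃ x, x ∉ S := by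
          by_contra h
          push_neg at h
          exact hSne (Set.eq_univ_of_forall h)
        have h2 := hS.2 x hx
        rw [top_nbhd_diff] at h2
        have hxc : x ∈ Sᶜ := hx
        have hd : (Sᶜ \ {x}).ncard = Sᶜ.ncard - 1 :=
          Set.ncard_diff_singleton_of_mem hxc
        rw [hd] at h2
        have hck : k + 1 ≤ Sᶜ.ncard := by omega
        have := hcard S
        have := hbig S hS
        omega
      · rintro rfl
        refine ⟨Set.univ, ⟨⟨fun x => ?_, fun x hx => absurd (Set.mem_univ x) hx⟩,
          by rw [Set.ncard_univ, Nat.card_eq_fintype_card, Fintype.card_fin]⟩⟩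
        rw [top_closed_nbhd, Set.univ_inter, Set.ncard_univ, Nat.card_eq_fintype_card,
          Fintype.card_fin]
        omega
    unfold SimpleGraph.kRDNum
    rw [hset, csInf_singleton]
  · -- n ≥ 2k+1 case
    intro hge
    have hmem : k ∈ {m | ∃ S : Set (Fin n), (⊤ : SimpleGraph (Fin n)).IsKRDS k S ∧ S.ncard = m} := by
      refine ⟨{i : Fin n | (i : ℕ) < k}, ⟨⟨fun x => ?_, fun x hx => ?_⟩, ?_⟩⟩
      · rw [top_closed_nbhd, Set.univ_inter]
        have : Set.ncard {i : Fin n | (i : ℕ) < k} = k := by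
          have : {i : Fin n | (i : ℕ) < k} = ↑(Finset.filter (fun i : Fin n => (i : ℕ) < k)
              Finset.univ) := by ext i; simp
          rw [this, Set.ncard_coe_finset]
          exact filter_lt_card n k hn
        omega
      · rw [top_nbhd_diff]
        set S := {i : Fin n | (i : ℕ) < k}
        have hS : S.ncard = k := by
          have : S = ↑(Finset.filter (fun i : Fin n => (i : ℕ) < k) Finset.univ) := by
            ext i; simp [S]
          rw [this, Set.ncard_coe_finset]
          exact filter_lt_card n k hn
        have hxc : x ∈ Sᶜ := hx
        have hd : (Sᶜ \ {x}).ncard = Sᶜ.ncard - 1 :=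
          Set.ncard_diff_singleton_of_mem hxc
        have := hcard S
        omega
      · have : {i : Fin n | (i : ℕ) < k} = ↑(Finset.filter (fun i : Fin n => (i : ℕ) < k)
            Finset.univ) := by ext i; simp
        rw [this, Set.ncard_coe_finset]
        exact filter_lt_card n k hn
    refine le_antisymm (Nat.sInf_le hmem) (le_csInf ⟨k, hmem⟩ ?_)
    rintro m ⟨S, hS, rfl⟩
    exact hbig S hS
end

section
/- For every integer n ≥ 3, the restrained domination number of the cycle C_n equals ⌈n/3⌉ + 1 if n ≡ 2 (mod 3), and equals ⌈n/3⌉ otherwise. -/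
open Fin.CommRing in
lemma neighborSet_cycle {m : ℕ} (x : Fin (m+3)) :
    (SimpleGraph.cycleGraph (m+3)).neighborSet x = {x - 1, x + 1} := by
  ext y
  simp only [SimpleGraph.mem_neighborSet, Set.mem_insert_iff, Set.mem_singleton_iff]
  refine (SimpleGraph.cycleGraph_adj (n := m+1) (u := x) (v := y)).trans ?_
  constructor
  · rintro (h | h)
    · left; linear_combination -h
    · right; linear_combination h
  · rintro (h | h)
    · left; linear_combination -h
    · right; linear_combination h

lemma tri_nonempty {k : ℕ} {a b c : Fin k} {S : Set (Fin k)} :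
    ((insert a ({b, c} : Set (Fin k))) ∩ S).Nonempty ↔ a ∈ S ∨ b ∈ S ∨ c ∈ S := by
  constructor
  · rintro ⟨y, hy, hyS⟩
    rcases hy with rfl | rfl | rfl <;> tauto
  · rintro (h | h | h)
    · exact ⟨a, by simp, h⟩
    · exact ⟨b, by simp, h⟩
    · exact ⟨c, by simp, h⟩

lemma pair_diff_nonempty {k : ℕ} {b c : Fin k} {S : Set (Fin k)} :
    (({b, c} : Set (Fin k)) \ S).Nonempty ↔ b ∉ S ∨ c ∉ S := by
  constructor
  · rintro ⟨y, hy, hyS⟩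
    rcases hy with rfl | rfl <;> tauto
  · rintro (h | h)
    · exact ⟨b, by simp, h⟩
    · exact ⟨c, by simp, h⟩

open Fin.CommRing in
lemma isKRDS_cycle_iff {m : ℕ} (S : Set (Fin (m+3))) :
    (SimpleGraph.cycleGraph (m+3)).IsKRDS 1 S ↔
      (∀ x, x ∈ S ∨ x + 1 ∈ S ∨ x + 2 ∈ S) ∧
      (∀ x, x + 1 ∉ S → (x ∉ S ∨ x + 2 ∉ S)) := by
  unfold SimpleGraph.IsKRDS
  have key : ∀ A : Set (Fin (m+3)), 1 ≤ A.ncard ↔ A.Nonempty :=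
    fun A => Set.ncard_pos A.toFinite
  simp only [neighborSet_cycle, key, tri_nonempty, pair_diff_nonempty]
  constructor
  · rintro ⟨h1, h2⟩
    constructor
    · intro x
      have := h1 (x + 1)
      rw [show x + 1 - 1 = x by ring, show x + 1 + 1 = x + 2 by ring] at this
      tauto
    · intro x hx
      have := h2 (x + 1) hx
      rw [show x + 1 - 1 = x by ring, show x + 1 + 1 = x + 2 by ring] at this
      tauto
  · rintro ⟨h1, h2⟩
    constructor
    · intro x
      have := h1 (x - 1)
      rw [show x - 1 + 1 = x by ring, show x - 1 + 2 = x + 1 by ring] at this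
      tauto
    · intro x hx
      have := h2 (x - 1)
      rw [show x - 1 + 1 = x by ring, show x - 1 + 2 = x + 1 by ring] at this
      tauto

open Fin.CommRing in
lemma cycle_lower {m : ℕ} (F : Finset (Fin (m+3)))
    (h1 : ∀ x, x ∈ F ∨ x + 1 ∈ F ∨ x + 2 ∈ F)
    (h2 : ∀ x, x + 1 ∉ F → (x ∉ F ∨ x + 2 ∉ F)) :
    m + 3 ≤ 3 * F.card ∧ 2 ∣ (m + 3 - F.card) := by
  classical
  have key : ∀ d : Fin (m+3), (Finset.univ.filter fun x => x + d ∈ F).card = F.card := by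
    intro d
    refine Finset.card_nbij' (fun x => x + d) (fun x => x - d) ?_ ?_ ?_ ?_
    · intro a ha; simpa using (Finset.mem_filter.mp ha).2
    · intro a ha; simpa [sub_add_cancel] using ha
    · intro a _; simp
    · intro a _; simp [sub_add_cancel]
  constructor
  · set X0 := (Finset.univ.filter fun x : Fin (m+3) => x + 0 ∈ F) with hX0
    set X1 := (Finset.univ.filter fun x : Fin (m+3) => x + 1 ∈ F) with hX1
    set X2 := (Finset.univ.filter fun x : Fin (m+3) => x + 2 ∈ F) with hX2
    have hsub : (Finset.univ : Finset (Fin (m+3))) ⊆ X0 ∪ (X1 ∪ X2) := by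
      intro x _
      simp only [hX0, hX1, hX2, Finset.mem_union, Finset.mem_filter, Finset.mem_univ,
        true_and, add_zero]
      exact h1 x
    have hc := Finset.card_le_card hsub
    rw [Finset.card_univ, Fintype.card_fin] at hc
    have h0 : X0.card = F.card := key 0
    have h1' : X1.card = F.card := key 1
    have h2' : X2.card = F.card := key 2
    have hle1 := Finset.card_union_le X0 (X1 ∪ X2)
    have hle2 := Finset.card_union_le X1 X2
    omega
  · set T : Finset (Fin (m+3)) := Fᶜ with hT
    set A : Finset (Fin (m+3)) := T.filter (fun x => x + 1 ∈ T) with hA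
    set B : Finset (Fin (m+3)) := A.image (· + 1) with hB
    have hBcard : B.card = A.card :=
      Finset.card_image_of_injective _ (add_left_injective 1)
    have hdisj : Disjoint A B := by
      rw [Finset.disjoint_left]
      intro x hxA hxB
      simp only [hB, Finset.mem_image] at hxB
      obtain ⟨z, hz, hzx⟩ := hxB
      simp only [hA, Finset.mem_filter, hT, Finset.mem_compl] at hxA hz
      have hx2 : x + 1 ∉ F := hxA.2
      have hx0 : x ∉ F := hxA.1
      have hzm : z ∉ F := hz.1
      have := h1 z
      have e1 : z + 1 = x := hzx
      have e2 : z + 2 = x + 1 := by rw [← e1]; ring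
      rw [e1, e2] at this
      tauto
    have hunion : A ∪ B = T := by
      ext x
      simp only [Finset.mem_union, hB, Finset.mem_image, hA, Finset.mem_filter]
      constructor
      · rintro (⟨hx, _⟩ | ⟨z, ⟨hz, _⟩, hzx⟩)
        · exact hx
        · subst hzx
          exact ‹z + 1 ∈ T›
      · intro hx
        by_cases hx1 : x + 1 ∈ T
        · exact Or.inl ⟨hx, hx1⟩
        · right
          refine ⟨x - 1, ⟨?_, ?_⟩, by rw [sub_add_cancel]⟩
          · have := h2 (x - 1)
            rw [show x - 1 + 1 = x by ring, show x - 1 + 2 = x + 1 by ring] at this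
            simp only [hT, Finset.mem_compl] at hx hx1 ⊢
            have hx1F : x + 1 ∈ F := not_not.mp hx1
            tauto
          · rw [sub_add_cancel]; exact hx
    have hTcard : T.card = 2 * A.card := by
      rw [← hunion, Finset.card_union_of_disjoint hdisj, hBcard]; ring
    have hcompl : T.card = (m + 3) - F.card := by
      rw [hT, Finset.card_compl, Fintype.card_fin]
    omega

lemma card_filter_mod3 (n : ℕ) :
    ((Finset.range n).filter (fun v => v % 3 = 0)).card = (n + 2) / 3 := by
  induction n with
  | zero => simp
  | succ n ih =>
    rw [Finset.range_add_one, Finset.filter_insert]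
    by_cases h : n % 3 = 0
    · rw [if_pos h, Finset.card_insert_of_notMem (by simp)]
      omega
    · rw [if_neg h]
      omega

def cycCP (n : ℕ) : ℕ → Prop := fun v => v % 3 = 0 ∨ (n % 3 = 2 ∧ v = n - 1)

instance (n v : ℕ) : Decidable (cycCP n v) := by unfold cycCP; infer_instance

lemma val_add_one {m : ℕ} (x : Fin (m+3)) : (x + 1).val = (x.val + 1) % (m+3) := by
  rw [Fin.val_add]
  norm_num

lemma val_add_two {m : ℕ} (x : Fin (m+3)) : (x + 2).val = (x.val + 2) % (m+3) := by
  rw [Fin.val_add]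
  norm_num

lemma mod_cases {m v : ℕ} (hv : v < m + 3) (c : ℕ) (hc : c = 1 ∨ c = 2) :
    (v + c) % (m + 3) = v + c ∨ ((v + c) % (m+3) = 0 ∧ v + c = m + 3) ∨
      ((v + c) % (m+3) = 1 ∧ v + c = m + 4) := by
  rcases Nat.lt_or_ge (v + c) (m+3) with h | h
  · exact Or.inl (Nat.mod_eq_of_lt h)
  · have : v + c = m + 3 ∨ v + c = m + 4 := by omega
    rcases this with h' | h'
    · exact Or.inr (Or.inl ⟨by rw [h']; exact Nat.mod_self _, h'⟩)
    · refine Or.inr (Or.inr ⟨?_, h'⟩)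
      rw [h', show m + 4 = 1 + (m+3) by ring, Nat.add_mod_right]
      exact Nat.mod_eq_of_lt (by omega)

lemma cycC_h1 {m : ℕ} (x : Fin (m+3)) :
    cycCP (m+3) x.val ∨ cycCP (m+3) (x+1).val ∨ cycCP (m+3) (x+2).val := by
  rw [val_add_one, val_add_two]
  have hv := x.isLt
  have e1 := mod_cases hv 1 (Or.inl rfl)
  have e2 := mod_cases hv 2 (Or.inr rfl)
  have ha : (x.val + 1) % (m+3) < m+3 := Nat.mod_lt _ (by omega)
  have hb : (x.val + 2) % (m+3) < m+3 := Nat.mod_lt _ (by omega)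
  unfold cycCP
  generalize (x.val + 1) % (m+3) = a at e1 ha ⊢
  generalize (x.val + 2) % (m+3) = b at e2 hb ⊢
  omega

lemma cycC_h2 {m : ℕ} (x : Fin (m+3)) (hx : ¬ cycCP (m+3) (x+1).val) :
    ¬ cycCP (m+3) x.val ∨ ¬ cycCP (m+3) (x+2).val := by
  rw [val_add_one] at hx
  rw [val_add_two]
  have hv := x.isLt
  have e1 := mod_cases hv 1 (Or.inl rfl)
  have e2 := mod_cases hv 2 (Or.inr rfl)
  have ha : (x.val + 1) % (m+3) < m+3 := Nat.mod_lt _ (by omega)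
  have hb : (x.val + 2) % (m+3) < m+3 := Nat.mod_lt _ (by omega)
  unfold cycCP at *
  generalize (x.val + 1) % (m+3) = a at e1 ha hx
  generalize (x.val + 2) % (m+3) = b at e2 hb ⊢
  omega

open Fin.CommRing in
lemma cycC_card {m : ℕ} :
    (Finset.univ.filter fun y : Fin (m+3) => cycCP (m+3) y.val).card =
      (m + 5) / 3 + (if (m+3) % 3 = 2 then 1 else 0) := by
  have htrans : (Finset.univ.filter fun y : Fin (m+3) => cycCP (m+3) y.val).card =
      ((Finset.range (m+3)).filter (cycCP (m+3))).card := by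
    refine Finset.card_nbij' Fin.val (fun v => (v : Fin (m+3))) ?_ ?_ ?_ ?_
    · intro a ha
      simp only [Finset.mem_coe, Finset.mem_filter, Finset.mem_univ, true_and] at ha
      simp only [Finset.mem_coe, Finset.mem_filter, Finset.mem_range]
      exact ⟨a.isLt, ha⟩
    · intro v hv
      simp only [Finset.mem_coe, Finset.mem_filter, Finset.mem_range] at hv
      simp only [Finset.mem_coe, Finset.mem_filter, Finset.mem_univ, true_and]
      rw [Fin.val_cast_of_lt hv.1]; exact hv.2
    · intro a _; exact Fin.cast_val_eq_self a
    · intro v hv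
      simp only [Finset.mem_coe, Finset.mem_filter, Finset.mem_range] at hv
      exact Fin.val_cast_of_lt hv.1
  rw [htrans]
  by_cases hc : (m+3) % 3 = 2
  · rw [if_pos hc]
    have hsplit : (Finset.range (m+3)).filter (cycCP (m+3)) =
        insert (m+2) ((Finset.range (m+3)).filter (fun v => v % 3 = 0)) := by
      ext v
      simp only [Finset.mem_insert, Finset.mem_filter, Finset.mem_range]
      unfold cycCP
      omega
    rw [hsplit, Finset.card_insert_of_notMem (by simp; omega), card_filter_mod3]
  · rw [if_neg hc]
    have hsplit : (Finset.range (m+3)).filter (cycCP (m+3)) =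
        (Finset.range (m+3)).filter (fun v => v % 3 = 0) := by
      ext v
      simp only [Finset.mem_filter, Finset.mem_range]
      unfold cycCP
      omega
    rw [hsplit, card_filter_mod3]
    omega

/-- For every n ≥ 3, the restrained domination number of the cycle C_n equals
⌈n/3⌉ + 1 if n ≡ 2 (mod 3), and ⌈n/3⌉ otherwise. -/
theorem rDNum_cycleGraph (n : ℕ) (hn : 3 ≤ n) :
    ((SimpleGraph.cycleGraph n).kRDNum 1 : ℤ) =
      if n % 3 = 2 then ⌈(n : ℚ) / 3⌉ + 1 else ⌈(n : ℚ) / 3⌉ := by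
  obtain ⟨m, rfl⟩ : ∃ m, n = m + 3 := ⟨n - 3, by omega⟩
  have hmem : ((m + 5) / 3 + (if (m+3) % 3 = 2 then 1 else 0)) ∈
      {k | ∃ S : Set (Fin (m+3)), (SimpleGraph.cycleGraph (m+3)).IsKRDS 1 S ∧ S.ncard = k} := by
    refine ⟨(↑(Finset.univ.filter fun y : Fin (m+3) => cycCP (m+3) y.val) : Set (Fin (m+3))),
      ?_, ?_⟩
    · rw [isKRDS_cycle_iff]
      constructor
      · intro x
        simpa using cycC_h1 x
      · intro x hx
        have := cycC_h2 x (by simpa using hx)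
        simpa using this
    · rw [Set.ncard_coe_finset, cycC_card]
  have hkr : (SimpleGraph.cycleGraph (m+3)).kRDNum 1 =
      (m + 5) / 3 + (if (m+3) % 3 = 2 then 1 else 0) := by
    classical
    unfold SimpleGraph.kRDNum
    refine le_antisymm (Nat.sInf_le hmem) (le_csInf ⟨_, hmem⟩ ?_)
    rintro b ⟨S, hS, rfl⟩
    rw [isKRDS_cycle_iff] at hS
    obtain ⟨hd, hr⟩ := hS
    have h1' : ∀ x, x ∈ S.toFinset ∨ x + 1 ∈ S.toFinset ∨ x + 2 ∈ S.toFinset := by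
      simpa [Set.mem_toFinset] using hd
    have h2' : ∀ x, x + 1 ∉ S.toFinset → (x ∉ S.toFinset ∨ x + 2 ∉ S.toFinset) := by
      simpa [Set.mem_toFinset] using hr
    obtain ⟨hA, hB⟩ := cycle_lower S.toFinset h1' h2'
    have hcard : S.ncard = S.toFinset.card := Set.ncard_eq_toFinset_card' S
    have hle : S.toFinset.card ≤ m + 3 := by
      calc S.toFinset.card ≤ (Finset.univ : Finset (Fin (m+3))).card := Finset.card_le_univ _
      _ = m + 3 := by simp
    rw [hcard]
    split_ifs with h <;> omega
  rw [hkr]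
  have hceil : ⌈((m + 3 : ℕ) : ℚ) / 3⌉ = (((m + 5) / 3 : ℕ) : ℤ) := by
    have hq1 : (m + 3) ≤ 3 * ((m + 5) / 3) := by omega
    have hq2 : 3 * ((m + 5) / 3) < (m + 3) + 3 := by omega
    set q : ℕ := (m + 5) / 3 with hq
    rw [Int.ceil_eq_iff]
    constructor
    · rw [lt_div_iff₀ (by norm_num : (0:ℚ) < 3)]
      have h2' : ((3 * q : ℕ) : ℚ) < ((m + 3 + 3 : ℕ) : ℚ) := by exact_mod_cast hq2
      push_cast at h2' ⊢
      linarith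
    · rw [div_le_iff₀ (by norm_num : (0:ℚ) < 3)]
      have h1' : ((m + 3 : ℕ) : ℚ) ≤ ((3 * q : ℕ) : ℚ) := by exact_mod_cast hq1
      push_cast at h1' ⊢
      linarith
  rw [hceil]
  split_ifs with h <;> push_cast <;> omega
end

section
/- For every integer n ≥ 4, the restrained domination number of the complement of the cycle C_n equals 4 if n = 4, equals 3 if n = 5, and equals 2 if n ≥ 6. -/
open SimpleGraph Finset

def PP (n : ℕ) (F : Finset (Fin n)) : Prop :=
  (∀ x : Fin n, ∃ y ∈ F, y = x ∨ ((cycleGraph n)ᶜ).Adj x y) ∧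
  ∀ x : Fin n, x ∉ F → ∃ y, y ∉ F ∧ ((cycleGraph n)ᶜ).Adj x y

instance (n : ℕ) (F : Finset (Fin n)) : Decidable (PP n F) := by
  unfold PP; infer_instance

lemma isKRDS_coe_iff (n : ℕ) (F : Finset (Fin n)) :
    ((cycleGraph n)ᶜ).IsKRDS 1 ↑F ↔ PP n F := by
  unfold SimpleGraph.IsKRDS PP
  have h1 : ∀ x : Fin n,
      (1 ≤ ((insert x (((cycleGraph n)ᶜ).neighborSet x)) ∩ ↑F).ncard ↔
        ∃ y ∈ F, y = x ∨ ((cycleGraph n)ᶜ).Adj x y) := by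
    intro x
    rw [Nat.one_le_iff_ne_zero, Ne, Set.ncard_eq_zero (Set.toFinite _),
      ← Ne, ← Set.nonempty_iff_ne_empty]
    constructor
    · rintro ⟨y, hy1, hy2⟩
      refine ⟨y, hy2, ?_⟩
      rcases hy1 with h | h
      · exact Or.inl h
      · exact Or.inr h
    · rintro ⟨y, hy1, hy2⟩
      refine ⟨y, ?_, hy1⟩
      rcases hy2 with h | h
      · exact Or.inl h
      · exact Or.inr h
  have h2 : ∀ x : Fin n,
      (1 ≤ (((cycleGraph n)ᶜ).neighborSet x \ ↑F).ncard ↔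
        ∃ y, y ∉ F ∧ ((cycleGraph n)ᶜ).Adj x y) := by
    intro x
    rw [Nat.one_le_iff_ne_zero, Ne, Set.ncard_eq_zero (Set.toFinite _),
      ← Ne, ← Set.nonempty_iff_ne_empty]
    constructor
    · rintro ⟨y, hy1, hy2⟩
      exact ⟨y, hy2, hy1⟩
    · rintro ⟨y, hy1, hy2⟩
      exact ⟨y, hy2, hy1⟩
  simp only [h1, h2, Finset.mem_coe]

lemma kRDNum_eq (n : ℕ) :
    ((cycleGraph n)ᶜ).kRDNum 1 = sInf {m | ∃ F : Finset (Fin n), PP n F ∧ F.card = m} := by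
  classical
  unfold SimpleGraph.kRDNum
  congr 1
  ext m
  constructor
  · rintro ⟨S, hS, rfl⟩
    exact ⟨S.toFinset, (isKRDS_coe_iff _ _).1 (by rwa [Set.coe_toFinset]),
      by rw [← Set.ncard_coe_finset, Set.coe_toFinset]⟩
  · rintro ⟨F, hF, rfl⟩
    exact ⟨↑F, (isKRDS_coe_iff _ _).2 hF, Set.ncard_coe_finset F⟩

lemma mod_cases' (a n : ℕ) (h : a < 2 * n) (h0 : 0 < n) :
    (a % n = a ∧ a < n) ∨ (a % n = a - n ∧ n ≤ a) := by
  rcases Nat.lt_or_ge a n with h' | h'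
  · exact Or.inl ⟨Nat.mod_eq_of_lt h', h'⟩
  · exact Or.inr ⟨by rw [Nat.mod_eq_sub_mod h', Nat.mod_eq_of_lt (by omega)], h'⟩

lemma cycle_adj_nat {n : ℕ} (hn : 2 ≤ n) (x y : Fin n) :
    (cycleGraph n).Adj x y ↔ ((x.val + 1) % n = y.val ∨ (y.val + 1) % n = x.val) := by
  rw [cycleGraph_adj']
  have hx := x.is_lt
  have hy := y.is_lt
  have e : ∀ u v : Fin n, ((u - v).val = 1 ↔ (v.val + 1) % n = u.val) := by
    intro u v
    rw [Fin.sub_def]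
    simp only
    have h1 := mod_cases' (n - v.val + u.val) n (by omega) (by omega)
    have h2 := mod_cases' (v.val + 1) n (by omega) (by omega)
    have hu := u.is_lt
    have hv := v.is_lt
    omega
  rw [e, e]
  tauto

lemma compl_cycle_adj {n : ℕ} (hn : 2 ≤ n) (x y : Fin n) :
    ((cycleGraph n)ᶜ).Adj x y ↔
      x.val ≠ y.val ∧ (x.val + 1) % n ≠ y.val ∧ (y.val + 1) % n ≠ x.val := by
  rw [SimpleGraph.compl_adj, cycle_adj_nat hn, Ne, Fin.ext_iff]
  tauto

lemma pp_two_le {n : ℕ} (hn : 2 ≤ n) {F : Finset (Fin n)} (h : PP n F) : 2 ≤ F.card := by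
  by_contra hc
  push_neg at hc
  have hc' : F.card ≤ 1 := by omega
  have : Nonempty (Fin n) := ⟨⟨0, by omega⟩⟩
  rcases Finset.card_le_one_iff_subset_singleton.1 hc' with ⟨a, ha⟩
  obtain ⟨y, hyF, hy⟩ := h.1 ⟨(a.val + 1) % n, Nat.mod_lt _ (by omega)⟩
  have hya : y = a := by simpa using ha hyF
  subst hya
  have hmod := mod_cases' (y.val + 1) n (by have := y.is_lt; omega) (by omega)
  rcases hy with h' | h'
  · have hv : y.val = (y.val + 1) % n := congrArg Fin.val h'
    have := y.is_lt
    omega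
  · rw [compl_cycle_adj hn] at h'
    exact h'.2.2 rfl

lemma pp_witness {n : ℕ} (hn : 6 ≤ n) :
    PP n {⟨0, by omega⟩, ⟨3, by omega⟩} := by
  constructor
  · intro x
    have hx := x.is_lt
    by_cases h0 : x.val = 0
    · exact ⟨⟨0, by omega⟩, by simp, Or.inl (by simp [Fin.ext_iff]; omega)⟩
    by_cases h3 : x.val = 3
    · exact ⟨⟨3, by omega⟩, by simp, Or.inl (by simp [Fin.ext_iff]; omega)⟩
    by_cases h1 : x.val = 1 ∨ x.val = n - 1
    · refine ⟨⟨3, by omega⟩, by simp, Or.inr ?_⟩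
      rw [compl_cycle_adj (by omega)]
      have hm1 := mod_cases' (x.val + 1) n (by omega) (by omega)
      have hm2 : (3 + 1) % n = 4 := Nat.mod_eq_of_lt (by omega)
      simp only [Fin.val_mk]
      refine ⟨by omega, by omega, by omega⟩
    · refine ⟨⟨0, by omega⟩, by simp, Or.inr ?_⟩
      rw [compl_cycle_adj (by omega)]
      have hm1 := mod_cases' (x.val + 1) n (by omega) (by omega)
      have hm2 : (0 + 1) % n = 1 := Nat.mod_eq_of_lt (by omega)
      push_neg at h1
      simp only [Fin.val_mk]
      refine ⟨by omega, by omega, by omega⟩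
  · intro x hxF
    have hx := x.is_lt
    have hx0 : x.val ≠ 0 ∧ x.val ≠ 3 := by
      constructor <;> intro h <;> apply hxF <;> simp [Fin.ext_iff] <;> omega
    rcases Nat.lt_or_ge (x.val + 3) n with hA | hB
    · refine ⟨⟨x.val + 3, hA⟩, by simp [Fin.ext_iff]; omega, ?_⟩
      rw [compl_cycle_adj (by omega)]
      have hm1 := mod_cases' (x.val + 1) n (by omega) (by omega)
      have hm2 := mod_cases' (x.val + 3 + 1) n (by omega) (by omega)
      simp only [Fin.val_mk]
      refine ⟨by omega, by omega, by omega⟩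
    · by_cases h6 : x.val = 6
      · refine ⟨⟨2, by omega⟩, by simp [Fin.ext_iff], ?_⟩
        rw [compl_cycle_adj (by omega)]
        have hm1 := mod_cases' (x.val + 1) n (by omega) (by omega)
        have hm2 : (2 + 1) % n = 3 := Nat.mod_eq_of_lt (by omega)
        simp only [Fin.val_mk]
        refine ⟨by omega, by omega, by omega⟩
      · refine ⟨⟨x.val - 3, by omega⟩, by simp [Fin.ext_iff]; omega, ?_⟩
        rw [compl_cycle_adj (by omega)]
        have hm1 := mod_cases' (x.val + 1) n (by omega) (by omega)
        have hm2 := mod_cases' (x.val - 3 + 1) n (by omega) (by omega)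
        simp only [Fin.val_mk]
        refine ⟨by omega, by omega, by omega⟩


/-- For every n ≥ 4, the restrained domination number of the complement of the cycle
C_n equals 4 if n = 4, equals 3 if n = 5, and equals 2 if n ≥ 6. -/
theorem rDNum_compl_cycleGraph (n : ℕ) (hn : 4 ≤ n) :
    ((SimpleGraph.cycleGraph n)ᶜ).kRDNum 1 =
      if n = 4 then 4 else if n = 5 then 3 else 2 := by
  rw [kRDNum_eq]
  by_cases h4 : n = 4
  · subst h4
    simp only [if_pos rfl]
    apply le_antisymm
    · exact Nat.sInf_le ⟨Finset.univ, by decide, by decide⟩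
    · refine le_csInf ⟨4, Finset.univ, by decide, by decide⟩ ?_
      rintro m ⟨F, hF, rfl⟩
      exact (by decide : ∀ F : Finset (Fin 4), PP 4 F → 4 ≤ F.card) F hF
  by_cases h5 : n = 5
  · subst h5
    norm_num
    apply le_antisymm
    · exact Nat.sInf_le ⟨{0, 2, 4}, by decide, by decide⟩
    · refine le_csInf ⟨3, {0, 2, 4}, by decide, by decide⟩ ?_
      rintro m ⟨F, hF, rfl⟩
      exact (by decide : ∀ F : Finset (Fin 5), PP 5 F → 3 ≤ F.card) F hF
  · have hn6 : 6 ≤ n := by omega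
    simp only [if_neg h4, if_neg h5]
    have hcard : ({⟨0, by omega⟩, ⟨3, by omega⟩} : Finset (Fin n)).card = 2 := by
      rw [Finset.card_insert_of_notMem (by simp [Fin.ext_iff]), Finset.card_singleton]
    apply le_antisymm
    · exact Nat.sInf_le ⟨_, pp_witness hn6, hcard⟩
    · refine le_csInf ⟨2, _, pp_witness hn6, hcard⟩ ?_
      rintro m ⟨F, hF, rfl⟩
      exact pp_two_le (by omega) hF
end

section
/- Let k ≥ 1 and p ≥ 3 be integers and let G be a complete p-partite graph with minimum degree δ(G) ≥ k − 1. Then γ×k^r(G) ≥ ⌈p(k−1)/(p−1)⌉. -/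
/-- For a complete p-partite graph G (p ≥ 3) with δ(G) ≥ k − 1,
γ×k^r(G) ≥ ⌈p(k−1)/(p−1)⌉. -/
theorem kRDNum_complete_multipartite {V : Type*} [Fintype V] (G : SimpleGraph V)
    (k p : ℕ) (hk : 1 ≤ k) (hp : 3 ≤ p)
    (hdeg : ∀ v : V, k - 1 ≤ (G.neighborSet v).ncard)
    (hpart : ∃ f : V → Fin p, Function.Surjective f ∧ ∀ u v : V, G.Adj u v ↔ f u ≠ f v) :
    ⌈((p : ℚ) * ((k : ℚ) - 1)) / ((p : ℚ) - 1)⌉ ≤ (G.kRDNum k : ℤ) := by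
  classical
  obtain ⟨f, hf, hadj⟩ := hpart
  have hne : G.kRDNum k ∈ {m | ∃ S : Set V, G.IsKRDS k S ∧ S.ncard = m} := by
    apply Nat.sInf_mem
    refine ⟨(Set.univ : Set V).ncard, Set.univ,
      ⟨fun x => ?_, fun x hx => absurd (Set.mem_univ x) hx⟩, rfl⟩
    rw [Set.inter_univ,
      Set.ncard_insert_of_notMem (by simp) (Set.toFinite _)]
    have := hdeg x; omega
  obtain ⟨S, ⟨hS1, _⟩, hcard⟩ := hne
  set m := G.kRDNum k with hm
  set T := S.toFinset with hT
  have hTm : T.card = m := by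
    rw [hT, ← Set.ncard_eq_toFinset_card', hcard]
  have key : ∀ i : Fin p, k - 1 ≤ (T.filter (fun v => ¬ f v = i)).card := by
    intro i
    obtain ⟨x, hx⟩ := hf i
    have h1 := hS1 x
    have hsub : (insert x (G.neighborSet x)) ∩ S ⊆
        insert x ↑(T.filter (fun v => ¬ f v = i)) := by
      rintro y ⟨hy1, hy2⟩
      rcases hy1 with rfl | hy1
      · exact Set.mem_insert _ _
      · refine Set.mem_insert_of_mem _ ?_
        have hadj' : G.Adj x y := hy1
        rw [hadj] at hadj'
        simp only [Finset.coe_filter, Set.mem_setOf_eq, hT, Set.mem_toFinset]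
        exact ⟨hy2, fun h => hadj' (by rw [hx, ← h])⟩
    have h2 : ((insert x (G.neighborSet x)) ∩ S).ncard ≤
        (T.filter (fun v => ¬ f v = i)).card + 1 := by
      calc ((insert x (G.neighborSet x)) ∩ S).ncard
          ≤ (insert x ↑(T.filter (fun v => ¬ f v = i)) : Set V).ncard :=
            Set.ncard_le_ncard hsub (Set.toFinite _)
        _ ≤ (↑(T.filter (fun v => ¬ f v = i)) : Set V).ncard + 1 :=
            Set.ncard_insert_le _ _
        _ = (T.filter (fun v => ¬ f v = i)).card + 1 := by
            rw [Set.ncard_coe_finset]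
    omega
  have hsum1 : ∑ i : Fin p, (T.filter (fun v => f v = i)).card = m := by
    rw [← hTm]
    exact (Finset.card_eq_sum_card_fiberwise (fun x _ => Finset.mem_univ (f x))).symm
  have hsum2 : ∑ i : Fin p, ((T.filter (fun v => f v = i)).card
      + (T.filter (fun v => ¬ f v = i)).card) = p * m := by
    have : ∀ i : Fin p, (T.filter (fun v => f v = i)).card
        + (T.filter (fun v => ¬ f v = i)).card = m := by
      intro i
      rw [Finset.card_filter_add_card_filter_not, hTm]
    simp [this, Finset.sum_const, Finset.card_univ, mul_comm]
  have hsum3 : m + ∑ i : Fin p, (T.filter (fun v => ¬ f v = i)).card = p * m := by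
    rw [Finset.sum_add_distrib, hsum1] at hsum2
    exact hsum2
  have hkey2 : p * (k - 1) ≤ (p - 1) * m := by
    have hle : ∑ _i : Fin p, (k - 1) ≤
        ∑ i : Fin p, (T.filter (fun v => ¬ f v = i)).card :=
      Finset.sum_le_sum (fun i _ => key i)
    simp only [Finset.sum_const, Finset.card_univ, Fintype.card_fin, smul_eq_mul] at hle
    have h1 : 1 ≤ p := by omega
    nlinarith [Nat.sub_add_cancel hk, Nat.sub_add_cancel h1]
  rw [Int.ceil_le]
  have hp1 : (0:ℚ) < (p:ℚ) - 1 := by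
    have : (3:ℚ) ≤ (p:ℚ) := by exact_mod_cast hp
    linarith
  rw [div_le_iff₀ hp1]
  have h1 : ((p * (k - 1) : ℕ) : ℚ) ≤ (((p - 1) * m : ℕ) : ℚ) := by exact_mod_cast hkey2
  push_cast [Nat.cast_sub hk, Nat.cast_sub (by omega : 1 ≤ p)] at h1
  push_cast
  linarith
end

section
/- Let k ≥ 1 be an integer and let G be a graph with minimum degree δ(G) ≥ k − 1. Then γ×k^r(G) = k if and only if either G is the complete graph K_k, or there is a set S of k vertices of G such that S induces a complete subgraph, every vertex of V(G) − S is adjacent to every vertex of S, and the subgraph induced by V(G) − S has minimum degree at least k. -/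
/-- γ×k^r(G) = k iff G is the complete graph K_k, or G is obtained by joining every
vertex of a graph F with δ(F) ≥ k to every vertex of a complete graph on k vertices. -/
theorem kRDNum_eq_k_iff {V : Type*} [Fintype V] (G : SimpleGraph V) (k : ℕ) (hk : 1 ≤ k)
    (hdeg : ∀ v : V, k - 1 ≤ (G.neighborSet v).ncard) :
    G.kRDNum k = k ↔
      (Nonempty (G ≃g (⊤ : SimpleGraph (Fin k)))) ∨
      ∃ S : Finset V, S.card = k ∧
        (∀ u ∈ S, ∀ v ∈ S, u ≠ v → G.Adj u v) ∧
        (∀ u : V, u ∉ S → ∀ v ∈ S, G.Adj u v) ∧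
        (∀ u : V, u ∉ S → k ≤ (G.neighborSet u \ ↑S).ncard) := by
  classical
  have hmem : G.kRDNum k = k ↔ ∃ S : Set V, G.IsKRDS k S ∧ S.ncard = k := by
    constructor
    · intro h
      have hne : {m | ∃ S : Set V, G.IsKRDS k S ∧ S.ncard = m}.Nonempty := by
        by_contra hcon
        rw [Set.not_nonempty_iff_eq_empty] at hcon
        rw [SimpleGraph.kRDNum, hcon, Nat.sInf_empty] at h
        omega
      have hmem' := Nat.sInf_mem hne
      rw [SimpleGraph.kRDNum] at h
      rw [h] at hmem'
      exact hmem'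
    · rintro ⟨S, hS, hc⟩
      have hub : G.kRDNum k ≤ k := by
        rw [SimpleGraph.kRDNum]
        exact Nat.sInf_le ⟨S, hS, hc⟩
      have hlb : k ≤ G.kRDNum k := by
        rw [SimpleGraph.kRDNum]
        refine le_csInf ⟨k, S, hS, hc⟩ ?_
        rintro m ⟨T, hT, rfl⟩
        obtain ⟨x, -⟩ := Set.nonempty_of_ncard_ne_zero (by omega : S.ncard ≠ 0)
        calc k ≤ ((insert x (G.neighborSet x)) ∩ T).ncard := hT.1 x
          _ ≤ T.ncard := Set.ncard_le_ncard Set.inter_subset_right T.toFinite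
      omega
  rw [hmem]
  constructor
  · rintro ⟨T, hT, hc⟩
    have hsub : ∀ x : V, T ⊆ insert x (G.neighborSet x) := by
      intro x
      have h1 : ((insert x (G.neighborSet x)) ∩ T).ncard ≤ T.ncard :=
        Set.ncard_le_ncard Set.inter_subset_right T.toFinite
      have h2 := hT.1 x
      have heq : (insert x (G.neighborSet x)) ∩ T = T :=
        Set.eq_of_subset_of_ncard_le Set.inter_subset_right (by omega) T.toFinite
      intro y hy
      rw [← heq] at hy
      exact hy.1
    by_cases hUniv : T = Set.univ
    · left
      have hcard : Fintype.card V = k := by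
        rw [← Nat.card_eq_fintype_card, ← Set.ncard_univ, ← hUniv]; exact hc
      have hcomplete : ∀ u v : V, u ≠ v → G.Adj u v := by
        intro u v huv
        have hv := hsub u (hUniv ▸ Set.mem_univ v)
        rcases hv with rfl | h
        · exact absurd rfl huv
        · exact h
      refine ⟨⟨Fintype.equivFinOfCardEq hcard, ?_⟩⟩
      intro u v
      simp only [SimpleGraph.top_adj, ne_eq, Equiv.apply_eq_iff_eq]
      constructor
      · intro h
        exact hcomplete u v h
      · intro h
        exact h.ne
    · right
      refine ⟨T.toFinset, ?_, ?_, ?_, ?_⟩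
      · rw [Set.ncard_eq_toFinset_card'] at hc; exact hc
      · intro u hu v hv huv
        have hv' := hsub u (Set.mem_toFinset.mp hv)
        rcases hv' with rfl | h
        · exact absurd rfl huv
        · exact h
      · intro u hu v hv
        have hv' := hsub u (Set.mem_toFinset.mp hv)
        rcases hv' with rfl | h
        · exact absurd (Set.mem_toFinset.mpr (Set.mem_toFinset.mp hv)) hu
        · exact h
      · intro u hu
        have h := hT.2 u (by simpa using hu)
        simpa using h
  · rintro (he | ⟨S, hcard, hclique, hjoin, hmin⟩)
    · obtain ⟨e⟩ := he
      have hcard : Fintype.card V = k := by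
        simpa using Fintype.card_congr e.toEquiv
      have hadj : ∀ u v : V, u ≠ v → G.Adj u v := by
        intro u v h
        have htop : (⊤ : SimpleGraph (Fin k)).Adj (e u) (e v) := by
          simp only [SimpleGraph.top_adj, ne_eq]
          intro hcon
          exact h (e.toEquiv.injective hcon)
        exact e.map_rel_iff.mp htop
      refine ⟨Set.univ, ⟨?_, ?_⟩, by
        simp [Set.ncard_univ, Nat.card_eq_fintype_card, hcard]⟩
      · intro x
        have heq : insert x (G.neighborSet x) ∩ Set.univ = Set.univ := by
          ext y
          simp only [Set.mem_inter_iff, Set.mem_univ, and_true, iff_true, Set.mem_insert_iff,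
            SimpleGraph.mem_neighborSet]
          by_cases hxy : y = x
          · exact Or.inl hxy
          · exact Or.inr (hadj x y (fun h => hxy h.symm))
        rw [heq, Set.ncard_univ, Nat.card_eq_fintype_card, hcard]
      · intro x hx
        exact absurd (Set.mem_univ x) hx
    · refine ⟨↑S, ⟨?_, ?_⟩, by simp [Set.ncard_coe_finset, hcard]⟩
      · intro x
        have hsub : (S : Set V) ⊆ (insert x (G.neighborSet x)) ∩ S := by
          intro v hv
          refine ⟨?_, hv⟩
          by_cases hvx : v = x
          · exact Or.inl hvx
          · right
            by_cases hx : x ∈ S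
            · exact hclique x hx v hv (fun h => hvx h.symm)
            · exact hjoin x hx v hv
        calc k = (S : Set V).ncard := by simp [Set.ncard_coe_finset, hcard]
          _ ≤ _ := Set.ncard_le_ncard hsub (Set.toFinite _)
      · intro x hx
        exact hmin x (by simpa using hx)
end

section
/- Let k ≥ 1 be an integer and let G be a graph with n vertices, m edges and minimum degree δ(G) ≥ k − 1. Then γ×k^r(G) ≥ (3kn − 2m)/(2k + 1). -/
/-- For a graph G with n vertices, m edges and δ(G) ≥ k − 1,
γ×k^r(G) ≥ (3kn − 2m)/(2k + 1). -/
theorem kRDNum_lower_bound {V : Type*} [Fintype V] (G : SimpleGraph V) (k : ℕ)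
    (hk : 1 ≤ k) (hdeg : ∀ v : V, k - 1 ≤ (G.neighborSet v).ncard) :
    ((3 * k * Fintype.card V : ℚ) - 2 * (G.edgeSet.ncard : ℚ)) / (2 * k + 1) ≤
      (G.kRDNum k : ℚ) := by
  classical
  -- the defining set is nonempty (univ works)
  have hne : {m | ∃ S : Set V, G.IsKRDS k S ∧ S.ncard = m}.Nonempty := by
    refine ⟨(Set.univ : Set V).ncard, Set.univ, ⟨?_, ?_⟩, rfl⟩
    · intro x
      rw [Set.inter_univ, Set.ncard_insert_of_notMem (by simp)]
      have := hdeg x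
      omega
    · intro x hx; exact absurd (Set.mem_univ x) hx
  obtain ⟨S, hS, hcard⟩ := Nat.sInf_mem hne
  set n := Fintype.card V with hn
  set s := S.ncard with hs
  set A := S.toFinset with hA
  have hAs : A.card = s := by rw [hA, hs, Set.ncard_eq_toFinset_card']
  have hAmem : ∀ v, v ∈ A ↔ v ∈ S := fun v => Set.mem_toFinset
  -- a v : # neighbors in S ; b v : # neighbors outside S
  set a : V → ℕ := fun v => (Finset.univ.filter fun u => G.Adj v u ∧ u ∈ S).card with ha
  set b : V → ℕ := fun v => (Finset.univ.filter fun u => G.Adj v u ∧ u ∉ S).card with hb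
  have hia : ∀ v, (G.neighborSet v ∩ S).ncard = a v := by
    intro v
    have : G.neighborSet v ∩ S = ↑(Finset.univ.filter fun u => G.Adj v u ∧ u ∈ S) := by
      ext u; simp [SimpleGraph.mem_neighborSet]
    rw [this, Set.ncard_coe_finset]
  have hib : ∀ v, (G.neighborSet v \ S).ncard = b v := by
    intro v
    have : G.neighborSet v \ S = ↑(Finset.univ.filter fun u => G.Adj v u ∧ u ∉ S) := by
      ext u; simp [SimpleGraph.mem_neighborSet]
    rw [this, Set.ncard_coe_finset]
  -- degree splitting
  have hdeg' : ∀ v, a v + b v = G.degree v := by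
    intro v
    simp only [ha, hb, ← Finset.filter_filter]
    rw [Finset.card_filter_add_card_filter_not (p := fun u => u ∈ S),
      SimpleGraph.degree, SimpleGraph.neighborFinset_eq_filter]
  -- lower bounds
  have hbound1 : ∀ v ∈ A, k - 1 ≤ a v := by
    intro v hv
    have hv' : v ∈ S := (hAmem v).1 hv
    have h1 := hS.1 v
    rw [Set.insert_inter_of_mem hv'] at h1
    have h2 := Set.ncard_insert_le v (G.neighborSet v ∩ S)
    rw [hia v] at h2
    omega
  have hbound2 : ∀ v ∈ Aᶜ, k ≤ a v := by
    intro v hv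
    have hv' : v ∉ S := fun h => (Finset.mem_compl.1 hv) ((hAmem v).2 h)
    have h1 := hS.1 v
    rw [Set.insert_inter_of_notMem hv', hia v] at h1
    exact h1
  have hbound3 : ∀ v ∈ Aᶜ, k ≤ b v := by
    intro v hv
    have hv' : v ∉ S := fun h => (Finset.mem_compl.1 hv) ((hAmem v).2 h)
    have := hS.2 v hv'
    rwa [hib v] at this
  -- double counting
  have hdc : ∑ v ∈ A, b v = ∑ v ∈ Aᶜ, a v := by
    have l1 : ∀ v, b v = ∑ u ∈ Aᶜ, if G.Adj v u then 1 else 0 := by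
      intro v
      simp only [hb]
      have : (Finset.univ.filter fun u => G.Adj v u ∧ u ∉ S) = Aᶜ.filter (fun u => G.Adj v u) := by
        ext u; simp [hAmem, and_comm]
      rw [this, Finset.card_filter]
    have l2 : ∀ u, a u = ∑ v ∈ A, if G.Adj v u then 1 else 0 := by
      intro u
      simp only [ha]
      have : (Finset.univ.filter fun w => G.Adj u w ∧ w ∈ S) = A.filter (fun w => G.Adj u w) := by
        ext w; simp [hAmem, and_comm]
      rw [this, Finset.card_filter]
      exact Finset.sum_congr rfl fun v _ => by rw [G.adj_comm]
    calc ∑ v ∈ A, b v = ∑ v ∈ A, ∑ u ∈ Aᶜ, (if G.Adj v u then 1 else 0) :=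
          Finset.sum_congr rfl fun v _ => l1 v
      _ = ∑ u ∈ Aᶜ, ∑ v ∈ A, (if G.Adj v u then 1 else 0) := Finset.sum_comm
      _ = ∑ u ∈ Aᶜ, a u := Finset.sum_congr rfl fun u _ => (l2 u).symm
  -- handshake
  have hhs : ∑ v, G.degree v = 2 * G.edgeSet.ncard := by
    rw [G.sum_degrees_eq_twice_card_edges, ← SimpleGraph.coe_edgeFinset, Set.ncard_coe_finset]
  -- main inequality in ℕ
  have hsn : s ≤ n := by rw [← hAs]; exact Finset.card_le_univ A
  have hcompl : Aᶜ.card = n - s := by rw [Finset.card_compl, hAs]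
  have key : (k - 1) * s + 3 * k * (n - s) ≤ 2 * G.edgeSet.ncard := by
    have e1 : ∑ v, G.degree v = ∑ v ∈ A, (a v + b v) + ∑ v ∈ Aᶜ, (a v + b v) := by
      rw [Finset.sum_add_sum_compl A]
      exact (Finset.sum_congr rfl fun v _ => (hdeg' v).symm)
    have e2 : (k - 1) * s ≤ ∑ v ∈ A, a v := by
      calc (k - 1) * s = ∑ _v ∈ A, (k - 1) := by rw [Finset.sum_const, hAs, smul_eq_mul, mul_comm]
        _ ≤ ∑ v ∈ A, a v := Finset.sum_le_sum hbound1
    have e3 : k * (n - s) ≤ ∑ v ∈ Aᶜ, a v := by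
      calc k * (n - s) = ∑ _v ∈ Aᶜ, k := by rw [Finset.sum_const, hcompl, smul_eq_mul, mul_comm]
        _ ≤ ∑ v ∈ Aᶜ, a v := Finset.sum_le_sum hbound2
    have e4 : k * (n - s) ≤ ∑ v ∈ Aᶜ, b v := by
      calc k * (n - s) = ∑ _v ∈ Aᶜ, k := by rw [Finset.sum_const, hcompl, smul_eq_mul, mul_comm]
        _ ≤ ∑ v ∈ Aᶜ, b v := Finset.sum_le_sum hbound3
    have e5 : k * (n - s) ≤ ∑ v ∈ A, b v := by rw [hdc]; exact e3
    have : ∑ v ∈ A, (a v + b v) + ∑ v ∈ Aᶜ, (a v + b v) =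
        (∑ v ∈ A, a v + ∑ v ∈ A, b v) + (∑ v ∈ Aᶜ, a v + ∑ v ∈ Aᶜ, b v) := by
      rw [Finset.sum_add_distrib, Finset.sum_add_distrib]
    have hm : 2 * G.edgeSet.ncard =
        (∑ v ∈ A, a v + ∑ v ∈ A, b v) + (∑ v ∈ Aᶜ, a v + ∑ v ∈ Aᶜ, b v) := by
      rw [← hhs, e1, this]
    have h3 : 3 * k * (n - s) = 3 * (k * (n - s)) := by ring
    linarith
  -- cast to ℚ and finish
  have hkq : (1 : ℚ) ≤ (k : ℚ) := by exact_mod_cast hk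
  have hsnq : (s : ℚ) ≤ (n : ℚ) := by exact_mod_cast hsn
  have keyq : ((k : ℚ) - 1) * s + 3 * k * ((n : ℚ) - s) ≤ 2 * (G.edgeSet.ncard : ℚ) := by
    have := key
    have h1 : ((k - 1 : ℕ) : ℚ) = (k : ℚ) - 1 := by
      rw [Nat.cast_sub hk]; norm_num
    have h2 : ((n - s : ℕ) : ℚ) = (n : ℚ) - s := by rw [Nat.cast_sub hsn]
    calc ((k : ℚ) - 1) * s + 3 * k * ((n : ℚ) - s)
        = (((k - 1) * s + 3 * k * (n - s) : ℕ) : ℚ) := by push_cast [h1, h2]; ring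
      _ ≤ 2 * (G.edgeSet.ncard : ℚ) := by exact_mod_cast key
  have hden : (0 : ℚ) < 2 * k + 1 := by positivity
  rw [div_le_iff₀ hden]
  have hnum : G.kRDNum k = s := hcard.symm
  rw [hnum]
  nlinarith [keyq, hkq, hsnq]
end

section
/- For every graph G with n vertices and m edges, the restrained domination number satisfies γ^r(G) ≥ n − 2m/3. -/
/-- For any graph G with n vertices and m edges, γ^r(G) ≥ n − 2m/3. -/
theorem rDNum_lower_bound {V : Type*} [Fintype V] (G : SimpleGraph V) :
    (Fintype.card V : ℚ) - 2 * (G.edgeSet.ncard : ℚ) / 3 ≤ (G.kRDNum 1 : ℚ) := by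
  classical
  have hex : G.IsKRDS 1 Set.univ := by
    constructor
    · intro x
      rw [Set.inter_univ]
      have hfin : (insert x (G.neighborSet x)).Finite := Set.toFinite _
      have : 0 < (insert x (G.neighborSet x)).ncard := by
        rw [Set.ncard_pos hfin]
        exact ⟨x, Set.mem_insert _ _⟩
      omega
    · intro x hx; simp at hx
  have hne : {m | ∃ S : Set V, G.IsKRDS 1 S ∧ S.ncard = m}.Nonempty :=
    ⟨_, Set.univ, hex, rfl⟩
  obtain ⟨S, hS, hcard⟩ := Nat.sInf_mem hne
  -- choice functions
  have hσ : ∀ x : V, ∃ y, x ∉ S → G.Adj x y ∧ y ∈ S := by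
    intro x
    by_cases hx : x ∈ S
    · exact ⟨x, fun h => absurd hx h⟩
    · have h1 := hS.1 x
      have hfin : ((insert x (G.neighborSet x)) ∩ S).Finite := Set.toFinite _
      have : ((insert x (G.neighborSet x)) ∩ S).Nonempty := by
        rw [← Set.ncard_pos hfin]; omega
      obtain ⟨y, hy1, hy2⟩ := this
      rcases Set.mem_insert_iff.1 hy1 with rfl | hy1
      · exact absurd hy2 hx
      · exact ⟨y, fun _ => ⟨hy1, hy2⟩⟩
  have hτ : ∀ x : V, ∃ y, x ∉ S → G.Adj x y ∧ y ∉ S := by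
    intro x
    by_cases hx : x ∈ S
    · exact ⟨x, fun h => absurd hx h⟩
    · have h1 := hS.2 x hx
      have hfin : (G.neighborSet x \ S).Finite := Set.toFinite _
      have : (G.neighborSet x \ S).Nonempty := by
        rw [← Set.ncard_pos hfin]; omega
      obtain ⟨y, hy1, hy2⟩ := this
      exact ⟨y, fun _ => ⟨hy1, hy2⟩⟩
  choose σ hσ using hσ
  choose τ hτ using hτ
  set T : Finset V := Finset.univ.filter (· ∉ S) with hT
  have hmemT : ∀ t : V, t ∈ T ↔ t ∉ S := by
    intro t; simp [hT]
  set A : Finset (Sym2 V) := T.image (fun t => s(t, σ t)) with hA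
  set B : Finset (Sym2 V) := T.image (fun t => s(t, τ t)) with hB
  have hAsub : A ⊆ G.edgeFinset := by
    intro e he
    obtain ⟨t, ht, rfl⟩ := Finset.mem_image.1 he
    rw [SimpleGraph.mem_edgeFinset, SimpleGraph.mem_edgeSet]
    exact (hσ t ((hmemT t).1 ht)).1
  have hBsub : B ⊆ G.edgeFinset := by
    intro e he
    obtain ⟨t, ht, rfl⟩ := Finset.mem_image.1 he
    rw [SimpleGraph.mem_edgeFinset, SimpleGraph.mem_edgeSet]
    exact (hτ t ((hmemT t).1 ht)).1
  have hdisj : Disjoint A B := by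
    rw [Finset.disjoint_left]
    intro e heA heB
    obtain ⟨t, ht, he1⟩ := Finset.mem_image.1 heA
    obtain ⟨t', ht', he2⟩ := Finset.mem_image.1 heB
    have ht : t ∉ S := (hmemT t).1 ht
    have ht' : t' ∉ S := (hmemT t').1 ht'
    have hσS : σ t ∈ S := (hσ t ht).2
    have : s(t, σ t) = s(t', τ t') := he1.trans he2.symm
    rcases Sym2.eq_iff.1 this with ⟨h1, h2⟩ | ⟨h1, h2⟩
    · exact (hτ t' ht').2 (h2 ▸ hσS)
    · exact ht' (h2 ▸ hσS)
  have hAcard : A.card = T.card := by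
    rw [hA]
    apply Finset.card_image_of_injOn
    intro t ht t' ht' heq
    have ht : t ∉ S := (hmemT t).1 ht
    have ht' : t' ∉ S := (hmemT t').1 ht'
    rcases Sym2.eq_iff.1 heq with ⟨h1, _⟩ | ⟨h1, h2⟩
    · exact h1
    · subst h1; exact absurd (hσ t' ht').2 ht
  have hTB : T.card ≤ 2 * B.card := by
    rw [hB]
    apply Finset.card_le_mul_card_image
    intro e he
    obtain ⟨t0, _, rfl⟩ := Finset.mem_image.1 he
    have : T.filter (fun x => s(x, τ x) = s(t0, τ t0)) ⊆ {t0, τ t0} := by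
      intro x hx
      obtain ⟨-, hx⟩ := Finset.mem_filter.1 hx
      rcases Sym2.eq_iff.1 hx with ⟨h1, _⟩ | ⟨h1, _⟩
      · simp [h1]
      · simp [h1]
    calc (T.filter _).card ≤ ({t0, τ t0} : Finset V).card := Finset.card_le_card this
      _ ≤ 2 := Finset.card_insert_le _ _ |>.trans (by simp)
  have hsum : A.card + B.card ≤ G.edgeFinset.card := by
    rw [← Finset.card_union_of_disjoint hdisj]
    exact Finset.card_le_card (Finset.union_subset hAsub hBsub)
  have hkey : 3 * T.card ≤ 2 * G.edgeFinset.card := by omega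
  have hpart : T.card + S.ncard = Fintype.card V := by
    have : S.ncard = S.toFinset.card := Set.ncard_eq_toFinset_card' S
    rw [this]
    have : T = S.toFinsetᶜ := by
      ext x; simp [hT]
    rw [this, Finset.card_compl]
    have := Finset.card_le_univ S.toFinset
    omega
  have hm : G.edgeSet.ncard = G.edgeFinset.card := Set.ncard_eq_toFinset_card' _
  have hk : G.kRDNum 1 = S.ncard := hcard.symm
  rw [hk, hm]
  have h1 : (3 : ℚ) * T.card ≤ 2 * G.edgeFinset.card := by exact_mod_cast hkey
  have h2 : (T.card : ℚ) + S.ncard = Fintype.card V := by exact_mod_cast hpart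
  linarith
end

section
/- Let k ≥ 1 be an integer and let G be a graph of order n with minimum degree δ(G) ≥ k − 1. Then γ×k^r(G) · d×k^r(G) ≤ n. Moreover, if γ×k^r(G) · d×k^r(G) = n, then for every partition {V_1, …, V_d} of V(G) into d = d×k^r(G) k-tuple restrained dominating sets, each class V_i has cardinality γ×k^r(G). -/
/-- The `k`-tuple restrained domatic number of `G`: the maximum number of classes of a
partition of the vertex set all of whose classes are `k`-tuple restrained dominating
sets (0 if no such partition exists). -/
noncomputable def SimpleGraph.kRDomatic {V : Type*} [Fintype V] (G : SimpleGraph V) (k : ℕ) : ℕ :=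
  sSup {d | ∃ f : V → Fin d, ∀ i : Fin d, G.IsKRDS k (f ⁻¹' {i})}

lemma sum_fibers {V : Type*} [Fintype V] (d : ℕ) (f : V → Fin d) :
    ∑ i : Fin d, (f ⁻¹' {i} : Set V).ncard = Fintype.card V := by
  classical
  have h1 : ∀ i : Fin d, (f ⁻¹' {i} : Set V).ncard
      = (Finset.univ.filter (fun a => f a = i)).card := by
    intro i
    rw [Set.ncard_eq_toFinset_card']
    congr 1
    ext a
    simp
  simp_rw [h1]
  rw [← Finset.card_univ]
  exact (Finset.card_eq_sum_card_fiberwise (fun x _ => Finset.mem_univ (f x))).symm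

/-- γ×k^r(G) · d×k^r(G) ≤ n; moreover, in case of equality, every class of every
partition of the vertex set into d×k^r(G) k-tuple restrained dominating sets has
cardinality γ×k^r(G). -/
theorem kRDNum_mul_kRDomatic_le {V : Type*} [Fintype V] (G : SimpleGraph V) (k : ℕ)
    (hk : 1 ≤ k) (hdeg : ∀ v : V, k - 1 ≤ (G.neighborSet v).ncard) :
    G.kRDNum k * G.kRDomatic k ≤ Fintype.card V ∧
    (G.kRDNum k * G.kRDomatic k = Fintype.card V →
      ∀ f : V → Fin (G.kRDomatic k), (∀ i, G.IsKRDS k (f ⁻¹' {i})) →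
        ∀ i, (f ⁻¹' {i} : Set V).ncard = G.kRDNum k) := by
  classical
  have hγ : ∀ S : Set V, G.IsKRDS k S → G.kRDNum k ≤ S.ncard := by
    intro S hS
    exact Nat.sInf_le ⟨S, hS, rfl⟩
  rcases isEmpty_or_nonempty V with hV | hV
  · -- empty case
    have hγ0 : G.kRDNum k = 0 := by
      have : G.kRDNum k ≤ 0 := by
        apply Nat.sInf_le
        exact ⟨∅, ⟨fun x => isEmptyElim x, fun x => isEmptyElim x⟩, by simp⟩
      omega
    constructor
    · simp [hγ0]
    · intro _ f hf i
      have : (f ⁻¹' {i} : Set V) = ∅ := Set.eq_empty_of_isEmpty _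
      simp [this, hγ0]
  · -- nonempty case
    obtain ⟨x₀⟩ := hV
    -- key inequality from any partition
    have key : ∀ f : V → Fin (G.kRDomatic k), (∀ i, G.IsKRDS k (f ⁻¹' {i})) →
        G.kRDNum k * G.kRDomatic k ≤ Fintype.card V := by
      intro f hf
      calc G.kRDNum k * G.kRDomatic k
          = ∑ _i : Fin (G.kRDomatic k), G.kRDNum k := by
            simp [Finset.sum_const, mul_comm]
        _ ≤ ∑ i : Fin (G.kRDomatic k), (f ⁻¹' {i} : Set V).ncard :=
            Finset.sum_le_sum fun i _ => hγ _ (hf i)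
        _ = Fintype.card V := sum_fibers _ f
    constructor
    · by_cases hd : G.kRDomatic k = 0
      · simp [hd]
      · have hbdd : BddAbove {d | ∃ f : V → Fin d, ∀ i : Fin d, G.IsKRDS k (f ⁻¹' {i})} := by
          refine ⟨Fintype.card V, ?_⟩
          rintro d ⟨f, hf⟩
          have hsurj : Function.Surjective f := by
            intro i
            have h1 := (hf i).1 x₀
            have : ((insert x₀ (G.neighborSet x₀)) ∩ (f ⁻¹' {i})).Nonempty := by
              apply Set.nonempty_of_ncard_ne_zero
              omega
            obtain ⟨y, _, hy⟩ := this
            exact ⟨y, hy⟩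
          simpa using Fintype.card_le_of_surjective f hsurj
        have hne : {d | ∃ f : V → Fin d, ∀ i : Fin d, G.IsKRDS k (f ⁻¹' {i})}.Nonempty := by
          by_contra h
          rw [Set.not_nonempty_iff_eq_empty] at h
          apply hd
          simp [SimpleGraph.kRDomatic, h]
        have hmem := Nat.sSup_mem hne hbdd
        obtain ⟨f, hf⟩ := hmem
        exact key f hf
    · intro heq f hf i
      have hle : ∀ j ∈ Finset.univ, G.kRDNum k ≤ (f ⁻¹' {j} : Set V).ncard :=
        fun j _ => hγ _ (hf j)
      have hsumeq : ∑ _j : Fin (G.kRDomatic k), G.kRDNum k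
          = ∑ j : Fin (G.kRDomatic k), (f ⁻¹' {j} : Set V).ncard := by
        rw [sum_fibers _ f, ← heq]
        simp [Finset.sum_const, mul_comm]
      have := (Finset.sum_eq_sum_iff_of_le hle).mp hsumeq
      exact (this i (Finset.mem_univ i)).symm
end

section
/- Let G be a graph. If it is not the case that d(G) = 2 and d_t(G) = 1, then d^r(G) = d(G). -/
/-- `S` is a `k`-tuple dominating set of `G`: every vertex has at least `k` vertices
of `S` in its closed neighborhood. -/
def SimpleGraph.IsKDS {V : Type*} (G : SimpleGraph V) (k : ℕ) (S : Set V) : Prop :=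
  ∀ x : V, k ≤ ((insert x (G.neighborSet x)) ∩ S).ncard

/-- `S` is a `k`-tuple total dominating set of `G`: every vertex has at least `k`
neighbors in `S`. -/
def SimpleGraph.IsKTDS {V : Type*} (G : SimpleGraph V) (k : ℕ) (S : Set V) : Prop :=
  ∀ x : V, k ≤ (G.neighborSet x ∩ S).ncard

/-- The `k`-tuple domatic number of `G` (0 if no partition into kDSs exists). -/
noncomputable def SimpleGraph.kDomatic {V : Type*} [Fintype V] (G : SimpleGraph V) (k : ℕ) : ℕ :=
  sSup {d | ∃ f : V → Fin d, ∀ i : Fin d, G.IsKDS k (f ⁻¹' {i})}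

/-- The `k`-tuple total domatic number of `G` (0 if no partition into kTDSs exists). -/
noncomputable def SimpleGraph.kTDomatic {V : Type*} [Fintype V] (G : SimpleGraph V) (k : ℕ) : ℕ :=
  sSup {d | ∃ f : V → Fin d, ∀ i : Fin d, G.IsKTDS k (f ⁻¹' {i})}

/-- If it is not the case that d(G) = 2 and d_t(G) = 1, then d^r(G) = d(G). -/
theorem rDomatic_eq_domatic {V : Type*} [Fintype V] (G : SimpleGraph V)
    (h : ¬ (G.kDomatic 1 = 2 ∧ G.kTDomatic 1 = 1)) :
    G.kRDomatic 1 = G.kDomatic 1 := by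
  classical
  set A := {d | ∃ f : V → Fin d, ∀ i : Fin d, G.IsKRDS 1 (f ⁻¹' {i})} with hA
  set B := {d | ∃ f : V → Fin d, ∀ i : Fin d, G.IsKDS 1 (f ⁻¹' {i})} with hBdef
  have hAB : A ⊆ B := fun d ⟨f, hf⟩ => ⟨f, fun i => (hf i).1⟩
  by_cases hV : Nonempty V
  swap
  · -- empty vertex set: both sets are equal (everything is vacuous)
    have : IsEmpty V := not_nonempty_iff.mp hV
    have hset : A = B := by
      ext d
      constructor
      · exact fun ⟨f, _⟩ => ⟨f, fun i x => isEmptyElim x⟩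
      · exact fun ⟨f, _⟩ => ⟨f, fun i => ⟨fun x => isEmptyElim x, fun x => isEmptyElim x⟩⟩
    show sSup A = sSup B
    rw [hset]
  -- nonempty case
  obtain ⟨x₀⟩ := hV
  have hmem_of_card : ∀ {s : Set V}, 1 ≤ s.ncard → s.Nonempty := by
    intro s hs
    exact Set.nonempty_of_ncard_ne_zero (by omega)
  have hcard_of_mem : ∀ {s : Set V}, s.Nonempty → 1 ≤ s.ncard := by
    intro s hs
    exact (Set.ncard_pos (Set.toFinite s)).mpr hs
  have hBbdd : BddAbove B := by
    refine ⟨Fintype.card V, fun d hd => ?_⟩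
    obtain ⟨f, hf⟩ := hd
    have hs : Function.Surjective f := by
      intro i
      obtain ⟨y, -, hy⟩ := hmem_of_card (hf i x₀)
      exact ⟨y, hy⟩
    calc d = Fintype.card (Fin d) := (Fintype.card_fin d).symm
      _ ≤ Fintype.card V := Fintype.card_le_of_surjective f hs
  have hABbdd : BddAbove A := hBbdd.mono hAB
  have h1B : 1 ∈ B := by
    refine ⟨fun _ => 0, fun i x => hcard_of_mem ⟨x, Set.mem_insert _ _, ?_⟩⟩
    simp [Subsingleton.elim (0 : Fin 1) i]
  set d := G.kDomatic 1 with hd_def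
  have hdB : d ∈ B := Nat.sSup_mem ⟨1, h1B⟩ hBbdd
  have hd1 : 1 ≤ d := le_csSup hBbdd h1B
  obtain ⟨f, hf⟩ := hdB
  -- main goal: d ∈ A
  have hdA : d ∈ A := by
    rcases lt_trichotomy d 2 with hd2 | hd2 | hd2
    · -- d = 1
      have hd1' : d = 1 := by omega
      refine ⟨f, fun i => ⟨hf i, fun x hx => absurd ?_ hx⟩⟩
      have : Subsingleton (Fin d) := by rw [hd1']; infer_instance
      simp [Subsingleton.elim (f x) i]
    · -- d = 2 : use the hypothesis on the total domatic number
      set T := {m | ∃ g : V → Fin m, ∀ i : Fin m, G.IsKTDS 1 (g ⁻¹' {i})} with hTdef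
      have hTB : T ⊆ B := by
        rintro m ⟨g, hg⟩
        refine ⟨g, fun i x => le_trans (hg i x) (Set.ncard_le_ncard ?_ (Set.toFinite _))⟩
        exact Set.inter_subset_inter_left _ (Set.subset_insert _ _)
      have hTbdd : BddAbove T := hBbdd.mono hTB
      -- every vertex has a neighbor (no isolated vertices since d = 2)
      have hnbr : ∀ x : V, (G.neighborSet x).Nonempty := by
        intro x
        haveI : Nontrivial (Fin d) := Fin.nontrivial_iff_two_le.mpr (by omega)
        obtain ⟨j, hj⟩ := exists_ne (f x)
        obtain ⟨y, hy1, hy2⟩ := hmem_of_card (hf j x)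
        have hyx : y ≠ x := by
          rintro rfl
          exact hj (Eq.symm (by simpa using hy2))
        rcases Set.mem_insert_iff.mp hy1 with h' | h'
        · exact absurd h' hyx
        · exact ⟨y, h'⟩
      have h1T : 1 ∈ T := by
        refine ⟨fun _ => 0, fun i x => ?_⟩
        obtain ⟨y, hy⟩ := hnbr x
        refine hcard_of_mem ⟨y, hy, ?_⟩
        simp [Subsingleton.elim (0 : Fin 1) i]
      set m := G.kTDomatic 1 with hmdef
      have hdt1 : 1 ≤ m := le_csSup hTbdd h1T
      have hdt_ne : m ≠ 1 := fun hc => h ⟨hd2, hc⟩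
      have hdt2 : 2 ≤ m := by omega
      have hdtT : m ∈ T := Nat.sSup_mem ⟨1, h1T⟩ hTbdd
      obtain ⟨g, hg⟩ := hdtT
      have hget : ∀ (k : Fin m) (x : V), ∃ y ∈ G.neighborSet x, g y = k := by
        intro k x
        obtain ⟨y, hy1, hy2⟩ := hmem_of_card (hg k x)
        exact ⟨y, hy1, hy2⟩
      have hz : (0 : ℕ) < m := by omega
      have ho : (1 : ℕ) < m := by omega
      set z : Fin m := ⟨0, hz⟩ with hzdef
      set o : Fin m := ⟨1, ho⟩ with hodef
      have hzo : z ≠ o := by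
        simp [hzdef, hodef, Fin.ext_iff]
      set F : V → Fin 2 := fun x => if g x = z then 0 else 1 with hFdef
      have hF0 : ∀ y : V, y ∈ F ⁻¹' {(0 : Fin 2)} ↔ g y = z := by
        intro y
        by_cases hgy : g y = z <;> simp [hFdef, hgy]
      have hF1 : ∀ y : V, y ∈ F ⁻¹' {(1 : Fin 2)} ↔ g y ≠ z := by
        intro y
        by_cases hgy : g y = z <;> simp [hFdef, hgy]
      rw [hd2]
      refine ⟨F, fun i => ?_⟩
      fin_cases i
      · constructor
        · intro x
          obtain ⟨y, hy1, hy2⟩ := hget z x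
          exact hcard_of_mem ⟨y, Set.mem_insert_of_mem _ hy1, (hF0 y).mpr hy2⟩
        · intro x hx
          obtain ⟨y, hy1, hy2⟩ := hget o x
          refine hcard_of_mem ⟨y, hy1, fun hc => ?_⟩
          exact hzo (((hF0 y).mp hc ▸ hy2).symm ▸ rfl)
      · constructor
        · intro x
          obtain ⟨y, hy1, hy2⟩ := hget o x
          refine hcard_of_mem ⟨y, Set.mem_insert_of_mem _ hy1, (hF1 y).mpr ?_⟩
          rw [hy2]
          exact fun hc => hzo hc.symm
        · intro x hx
          obtain ⟨y, hy1, hy2⟩ := hget z x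
          refine hcard_of_mem ⟨y, hy1, fun hc => ?_⟩
          exact (hF1 y).mp hc hy2
    · -- d ≥ 3
      refine ⟨f, fun i => ⟨hf i, fun x hx => ?_⟩⟩
      have hfx : f x ≠ i := fun hc => hx (by simpa using hc)
      have hcard : ({i, f x} : Finset (Fin d)).card < (Finset.univ : Finset (Fin d)).card := by
        have h1 : ({i, f x} : Finset (Fin d)).card ≤ 2 :=
          le_trans (Finset.card_insert_le _ _) (by simp)
        have h2 : (Finset.univ : Finset (Fin d)).card = d := by simp
        omega
      have hns : ¬ (Finset.univ ⊆ ({i, f x} : Finset (Fin d))) :=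
        fun hsub => absurd (Finset.card_le_card hsub) (not_le.mpr hcard)
      obtain ⟨k, hk1, hk2⟩ := Finset.not_subset.mp hns
      simp only [Finset.mem_insert, Finset.mem_singleton, not_or] at hk2
      obtain ⟨y, hy1, hy2⟩ := hmem_of_card (hf k x)
      have hyk : f y = k := hy2
      have hyx : y ≠ x := fun hc => hk2.2 (hc ▸ hyk).symm
      rcases Set.mem_insert_iff.mp hy1 with h' | h'
      · exact absurd h' hyx
      · refine hcard_of_mem ⟨y, h', fun hc => hk2.1 ?_⟩
        have : f y = i := hc
        rw [← hyk, this]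
  exact le_antisymm
    (csSup_le ⟨d, hdA⟩ (fun a ha => le_csSup hBbdd (hAB ha)))
    (le_csSup hABbdd hdA)
end

section
/- Let k ≥ 2 be an integer and let G be a graph with minimum degree δ(G) ≥ k − 1. If V(G) can be partitioned into at least three k-tuple dominating sets of G, at least one of which has minimum cardinality γ×k(G), then γ×k^r(G) = γ×k(G). -/
/-- The `k`-tuple domination number of `G`. -/
noncomputable def SimpleGraph.kDNum {V : Type*} [Fintype V] (G : SimpleGraph V) (k : ℕ) : ℕ :=
  sInf {m | ∃ S : Set V, G.IsKDS k S ∧ S.ncard = m}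

/-- If the vertex set of G can be partitioned into at least three k-tuple dominating
sets, one of which has minimum cardinality γ×k(G), then γ×k^r(G) = γ×k(G). -/
theorem kRDNum_eq_kDNum {V : Type*} [Fintype V] (G : SimpleGraph V) (k : ℕ)
    (hk : 2 ≤ k) (hdeg : ∀ v : V, k - 1 ≤ (G.neighborSet v).ncard)
    (h : ∃ d : ℕ, 3 ≤ d ∧ ∃ f : V → Fin d,
      (∀ i : Fin d, G.IsKDS k (f ⁻¹' {i})) ∧
      ∃ i : Fin d, (f ⁻¹' {i} : Set V).ncard = G.kDNum k) :
    G.kRDNum k = G.kDNum k := by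
  obtain ⟨d, hd, f, hKDS, i, hmin⟩ := h
  set S : Set V := f ⁻¹' {i} with hS
  -- S is a kRDS
  have hrds : G.IsKRDS k S := by
    refine ⟨hKDS i, fun x hx => ?_⟩
    have hxi : f x ≠ i := hx
    -- pick a class l different from i and f x
    have hcard : ({i, f x} : Finset (Fin d)).card < Fintype.card (Fin d) := by
      have h2 : ({i, f x} : Finset (Fin d)).card ≤ 2 := by
        apply le_trans (Finset.card_insert_le _ _); simp
      have : (2 : ℕ) < Fintype.card (Fin d) := by simp; omega
      omega
    have hne' : ({i, f x} : Finset (Fin d)) ≠ Finset.univ := by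
      intro heq
      rw [heq, Finset.card_univ] at hcard
      exact hcard.ne rfl
    obtain ⟨l, _, hlmem⟩ := Finset.exists_of_ssubset
      (Finset.ssubset_univ_iff.mpr hne')
    have hli : l ≠ i := fun e => hlmem (by simp [e])
    have hlx : l ≠ f x := fun e => hlmem (by simp [e])
    have hsub : (insert x (G.neighborSet x)) ∩ (f ⁻¹' {l}) ⊆ G.neighborSet x \ S := by
      rintro y ⟨hy, hyl⟩
      have hyl' : f y = l := hyl
      have hyx : y ≠ x := fun e => hlx (by rw [← hyl', e])
      refine ⟨?_, fun hys => hli (by rw [← hyl']; exact hys)⟩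
      rcases hy with rfl | hy
      · exact absurd rfl hyx
      · exact hy
    exact le_trans (hKDS l x) (Set.ncard_le_ncard hsub (Set.toFinite _))
  have h1 : G.kRDNum k ≤ G.kDNum k :=
    Nat.sInf_le ⟨S, hrds, hmin⟩
  have hne : {m | ∃ T : Set V, G.IsKRDS k T ∧ T.ncard = m}.Nonempty :=
    ⟨S.ncard, S, hrds, rfl⟩
  obtain ⟨T, hT, hTn⟩ := Nat.sInf_mem hne
  have h2 : G.kDNum k ≤ G.kRDNum k := Nat.sInf_le ⟨T, hT.1, hTn⟩
  exact le_antisymm h1 h2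
end
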